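/- The measure μ on [0,1] with density 1/(x(1-x)) with respect to Lebesgue measure is invariant for the Romik map R: for every Borel set A ⊆ [0,1], μ(R⁻¹(A)) = μ(A). -/

import Mathlib

open MeasureTheory

noncomputable def romik (x : ℝ) : ℝ :=
  if x < 1/3 then x / (1 - 2*x) else if x < 1/2 then 1/x - 2 else 2 - 1/x

noncomputable def romikMeasure : Measure ℝ :=
  (volume.restrict (Set.Icc (0 : ℝ) 1)).withDensity
    (fun x => ENNReal.ofReal (1 / (x * (1 - x))))

open Set ENNReal

/-- 1-D lintegral change of variables. -/
lemma my_lintegral_image {s : Set ℝ} {f : ℝ → ℝ} {f' : ℝ → ℝ}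
    (hs : MeasurableSet s) (hf' : ∀ x ∈ s, HasDerivWithinAt f (f' x) s x)
    (hf : Set.InjOn f s) (g : ℝ → ℝ≥0∞) :
    ∫⁻ x in f '' s, g x = ∫⁻ x in s, ENNReal.ofReal |f' x| * g (f x) := by
  simpa only [ContinuousLinearMap.det_toSpanSingleton] using
    lintegral_image_eq_lintegral_abs_det_fderiv_mul volume hs
      (fun x hx => (hf' x hx).hasFDerivWithinAt) hf g

theorem romikMeasure_invariant (A : Set ℝ) (hA : MeasurableSet A)
    (hsub : A ⊆ Set.Icc (0 : ℝ) 1) :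
    romikMeasure (romik ⁻¹' A) = romikMeasure A := by
  have hRm : Measurable romik := by
    unfold romik
    apply Measurable.ite (measurableSet_lt measurable_id measurable_const)
    · exact measurable_id.div (measurable_const.sub (measurable_id.const_mul 2))
    · apply Measurable.ite (measurableSet_lt measurable_id measurable_const)
      · exact (measurable_const.div measurable_id).sub measurable_const
      · exact measurable_const.sub (measurable_const.div measurable_id)
  have hRA : MeasurableSet (romik ⁻¹' A) := hRm hA
  set h : ℝ → ℝ≥0∞ := fun x => ENNReal.ofReal (1 / (x * (1 - x))) with hh
  have hμ : ∀ B : Set ℝ, MeasurableSet B →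
      romikMeasure B = ∫⁻ x in B ∩ Set.Icc (0:ℝ) 1, h x := by
    intro B hB
    rw [romikMeasure, withDensity_apply _ hB, Measure.restrict_restrict hB]
  rw [hμ _ hRA, hμ _ hA, Set.inter_eq_left.mpr hsub]
  have hsplit : romik ⁻¹' A ∩ Set.Icc (0:ℝ) 1 =
      (romik ⁻¹' A ∩ Set.Ico (0:ℝ) (1/3)) ∪
      ((romik ⁻¹' A ∩ Set.Ico (1/3:ℝ) (1/2)) ∪
       (romik ⁻¹' A ∩ Set.Icc (1/2:ℝ) 1)) := by
    rw [← Set.inter_union_distrib_left, ← Set.inter_union_distrib_left]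
    congr 1
    ext x
    simp only [Set.mem_Icc, Set.mem_Ico, Set.mem_union]
    constructor
    · rintro ⟨h0, h1⟩
      rcases lt_or_ge x (1/3) with hx | hx
      · exact Or.inl ⟨h0, hx⟩
      rcases lt_or_ge x (1/2) with hx2 | hx2
      · exact Or.inr (Or.inl ⟨hx, hx2⟩)
      · exact Or.inr (Or.inr ⟨hx2, h1⟩)
    · rintro (⟨h0, h1⟩ | ⟨h0, h1⟩ | ⟨h0, h1⟩) <;> constructor <;> linarith
  -- branch 1: inverse g₁ y = y/(1+2y) on A ∩ [0,1)
  have hb1 : romik ⁻¹' A ∩ Set.Ico (0:ℝ) (1/3) =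
      (fun y => y / (1 + 2*y)) '' (A ∩ Set.Ico 0 1) := by
    ext x
    simp only [Set.mem_inter_iff, Set.mem_preimage, Set.mem_Ico, Set.mem_image]
    constructor
    · rintro ⟨hxA, h0, h1⟩
      have hden : (0:ℝ) < 1 - 2*x := by linarith
      refine ⟨x / (1 - 2*x), ⟨?_, ?_, ?_⟩, ?_⟩
      · have hr : romik x = x / (1 - 2*x) := if_pos h1
        rwa [hr] at hxA
      · exact div_nonneg h0 hden.le
      · rw [div_lt_one hden]; linarith
      · show x / (1 - 2*x) / (1 + 2*(x / (1 - 2*x))) = x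
        rw [div_div]
        have he : (1 - 2*x) * (1 + 2*(x / (1 - 2*x))) = 1 := by
          field_simp
          ring
        rw [he, div_one]
    · rintro ⟨y, ⟨hyA, hy0, hy1⟩, rfl⟩
      have hd : (0:ℝ) < 1 + 2*y := by linarith
      have hx3 : y / (1 + 2*y) < 1/3 := by
        rw [div_lt_iff₀ hd]; linarith
      refine ⟨?_, div_nonneg hy0 hd.le, hx3⟩
      have hr : romik (y / (1 + 2*y)) = (y / (1 + 2*y)) / (1 - 2*(y / (1 + 2*y))) := if_pos hx3
      rw [hr]
      have e1 : 1 - 2*(y / (1 + 2*y)) = 1/(1 + 2*y) := by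
        rw [eq_div_iff hd.ne']
        field_simp
        ring
      have he : y / (1 + 2*y) / (1 - 2*(y / (1 + 2*y))) = y := by
        rw [e1, one_div, div_inv_eq_mul, div_mul_cancel₀ _ hd.ne']
      rwa [he]
  -- branch 2: inverse g₂ y = 1/(y+2) on A ∩ (0,1]
  have hb2 : romik ⁻¹' A ∩ Set.Ico (1/3:ℝ) (1/2) =
      (fun y => 1 / (y + 2)) '' (A ∩ Set.Ioc 0 1) := by
    ext x
    simp only [Set.mem_inter_iff, Set.mem_preimage, Set.mem_Ico, Set.mem_image, Set.mem_Ioc]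
    constructor
    · rintro ⟨hxA, h0, h1⟩
      have hx0 : (0:ℝ) < x := by linarith
      have hr : romik x = 1/x - 2 := by
        rw [romik, if_neg (by linarith), if_pos h1]
      refine ⟨1/x - 2, ⟨by rwa [hr] at hxA, ?_, ?_⟩, ?_⟩
      · have : 2 < 1/x := by rw [lt_div_iff₀ hx0]; linarith
        linarith
      · have : 1/x ≤ 3 := by rw [div_le_iff₀ hx0]; linarith
        linarith
      · show 1 / (1/x - 2 + 2) = x
        have he : 1/x - 2 + 2 = 1/x := by ring
        rw [he, one_div_one_div]
    · rintro ⟨y, ⟨hyA, hy0, hy1⟩, rfl⟩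
      have hd : (0:ℝ) < y + 2 := by linarith
      have h13 : (1/3:ℝ) ≤ 1 / (y + 2) := by
        rw [div_le_div_iff₀ (by norm_num) hd]; linarith
      have h12 : 1 / (y + 2) < 1/2 := by
        rw [div_lt_div_iff₀ hd (by norm_num)]; linarith
      refine ⟨?_, h13, h12⟩
      have hr : romik (1 / (y + 2)) = 1 / (1 / (y + 2)) - 2 := by
        rw [romik, if_neg (by linarith), if_pos h12]
      rw [hr, one_div_one_div]
      simpa using hyA
  -- branch 3: inverse g₃ y = 1/(2-y) on A
  have hb3 : romik ⁻¹' A ∩ Set.Icc (1/2:ℝ) 1 = (fun y => 1 / (2 - y)) '' A := by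
    ext x
    simp only [Set.mem_inter_iff, Set.mem_preimage, Set.mem_Icc, Set.mem_image]
    constructor
    · rintro ⟨hxA, h0, h1⟩
      have hx0 : (0:ℝ) < x := by linarith
      have hr : romik x = 2 - 1/x := by
        rw [romik, if_neg (by linarith), if_neg (by linarith)]
      refine ⟨2 - 1/x, by rwa [hr] at hxA, ?_⟩
      show 1 / (2 - (2 - 1/x)) = x
      have he : 2 - (2 - 1/x) = 1/x := by ring
      rw [he, one_div_one_div]
    · rintro ⟨y, hyA, rfl⟩
      obtain ⟨hy0, hy1⟩ := hsub hyA
      have hd : (0:ℝ) < 2 - y := by linarith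
      have h12 : (1/2:ℝ) ≤ 1 / (2 - y) := by
        rw [div_le_div_iff₀ (by norm_num) hd]; linarith
      have h11 : 1 / (2 - y) ≤ 1 := by
        rw [div_le_one hd]; linarith
      refine ⟨?_, h12, h11⟩
      have hr : romik (1 / (2 - y)) = 2 - 1 / (1 / (2 - y)) := by
        rw [romik, if_neg (by linarith), if_neg (by linarith)]
      rw [hr, one_div_one_div]
      simpa using hyA
  have hA1 : MeasurableSet (A ∩ Set.Ico (0:ℝ) 1) := hA.inter measurableSet_Ico
  have hA2 : MeasurableSet (A ∩ Set.Ioc (0:ℝ) 1) := hA.inter measurableSet_Ioc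
  -- change of variables on each branch
  have hint1 : ∫⁻ x in romik ⁻¹' A ∩ Set.Ico (0:ℝ) (1/3), h x =
      ∫⁻ y in A ∩ Set.Ico (0:ℝ) 1, ENNReal.ofReal (1 / (y * (1 + y))) := by
    rw [hb1, my_lintegral_image hA1 (f' := fun y => 1 / (1 + 2*y)^2)
        (fun y hy => ?_) (fun y hy z hz hyz => ?_)]
    · apply setLIntegral_congr_fun hA1
      intro y hy
      obtain ⟨hyA, hy0, hy1⟩ := hy
      have hd : (0:ℝ) < 1 + 2*y := by linarith
      rw [hh]
      simp only []
      rw [← ENNReal.ofReal_mul (abs_nonneg _)]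
      congr 1
      rw [abs_of_pos (by positivity)]
      have key : (1 + 2*y)^2 * ((y/(1 + 2*y)) * (1 - y/(1 + 2*y))) = y * (1 + y) := by
        field_simp
        ring
      calc 1/(1 + 2*y)^2 * (1 / ((y/(1 + 2*y)) * (1 - y/(1 + 2*y))))
          = 1 / ((1 + 2*y)^2 * ((y/(1 + 2*y)) * (1 - y/(1 + 2*y)))) := by
            rw [div_mul_div_comm, one_mul]
        _ = 1 / (y * (1 + y)) := by rw [key]
    · obtain ⟨hyA, hy0, hy1⟩ := hy
      have hd : (0:ℝ) < 1 + 2*y := by linarith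
      have hder : HasDerivAt (fun y : ℝ => y / (1 + 2*y))
          ((1 * (1 + 2*y) - y * (2 * 1)) / (1 + 2*y)^2) y :=
        (hasDerivAt_id y).div (((hasDerivAt_id y).const_mul 2).const_add 1) hd.ne'
      have heq : (1 * (1 + 2*y) - y * (2 * 1)) / (1 + 2*y)^2 = 1 / (1 + 2*y)^2 := by
        ring
      rw [heq] at hder
      exact hder.hasDerivWithinAt
    · obtain ⟨-, hy0, -⟩ := hy
      obtain ⟨-, hz0, -⟩ := hz
      have hdy : (0:ℝ) < 1 + 2*y := by linarith
      have hdz : (0:ℝ) < 1 + 2*z := by linarith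
      rw [div_eq_div_iff hdy.ne' hdz.ne'] at hyz
      nlinarith
  have hint2 : ∫⁻ x in romik ⁻¹' A ∩ Set.Ico (1/3:ℝ) (1/2), h x =
      ∫⁻ y in A ∩ Set.Ioc (0:ℝ) 1, ENNReal.ofReal (1 / (1 + y)) := by
    rw [hb2, my_lintegral_image hA2 (f' := fun y => -(1 / (y + 2)^2))
        (fun y hy => ?_) (fun y hy z hz hyz => ?_)]
    · apply setLIntegral_congr_fun hA2
      intro y hy
      obtain ⟨hyA, hy0, hy1⟩ := hy
      have hd : (0:ℝ) < y + 2 := by linarith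
      rw [hh]
      simp only []
      rw [← ENNReal.ofReal_mul (abs_nonneg _)]
      congr 1
      rw [abs_neg, abs_of_pos (by positivity)]
      have key : (y + 2)^2 * ((1/(y + 2)) * (1 - 1/(y + 2))) = 1 + y := by
        field_simp
        ring
      calc 1/(y + 2)^2 * (1 / ((1/(y + 2)) * (1 - 1/(y + 2))))
          = 1 / ((y + 2)^2 * ((1/(y + 2)) * (1 - 1/(y + 2)))) := by
            rw [div_mul_div_comm, one_mul]
        _ = 1 / (1 + y) := by rw [key]
    · obtain ⟨hyA, hy0, hy1⟩ := hy
      have hd : (0:ℝ) < y + 2 := by linarith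
      have hder : HasDerivAt (fun y : ℝ => 1 / (y + 2)) (-(1 / (y + 2)^2)) y := by
        have h0 : HasDerivAt (fun y : ℝ => ((y + 2)⁻¹ : ℝ)) (-1 / (y + 2)^2) y :=
          ((hasDerivAt_id y).add_const 2).inv hd.ne'
        simpa [one_div, neg_div] using h0
      exact hder.hasDerivWithinAt
    · obtain ⟨-, hy0, -⟩ := hy
      obtain ⟨-, hz0, -⟩ := hz
      have hdy : (0:ℝ) < y + 2 := by linarith
      have hdz : (0:ℝ) < z + 2 := by linarith
      rw [div_eq_div_iff hdy.ne' hdz.ne'] at hyz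
      linarith
  have hint3 : ∫⁻ x in romik ⁻¹' A ∩ Set.Icc (1/2:ℝ) 1, h x =
      ∫⁻ y in A, ENNReal.ofReal (1 / (1 - y)) := by
    rw [hb3, my_lintegral_image hA (f' := fun y => 1 / (2 - y)^2)
        (fun y hy => ?_) (fun y hy z hz hyz => ?_)]
    · apply setLIntegral_congr_fun hA
      intro y hy
      obtain ⟨hy0, hy1⟩ := hsub hy
      have hd : (0:ℝ) < 2 - y := by linarith
      rw [hh]
      simp only []
      rw [← ENNReal.ofReal_mul (abs_nonneg _)]
      congr 1
      rw [abs_of_pos (by positivity)]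
      have key : (2 - y)^2 * ((1/(2 - y)) * (1 - 1/(2 - y))) = 1 - y := by
        field_simp
        ring
      calc 1/(2 - y)^2 * (1 / ((1/(2 - y)) * (1 - 1/(2 - y))))
          = 1 / ((2 - y)^2 * ((1/(2 - y)) * (1 - 1/(2 - y)))) := by
            rw [div_mul_div_comm, one_mul]
        _ = 1 / (1 - y) := by rw [key]
    · obtain ⟨hy0, hy1⟩ := hsub hy
      have hd : (0:ℝ) < 2 - y := by linarith
      have hder : HasDerivAt (fun y : ℝ => 1 / (2 - y)) (1 / (2 - y)^2) y := by
        have h0 : HasDerivAt (fun y : ℝ => ((2 - y)⁻¹ : ℝ)) (-(-1) / (2 - y)^2) y :=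
          ((hasDerivAt_id y).const_sub 2).inv hd.ne'
        simpa [one_div, neg_div] using h0
      exact hder.hasDerivWithinAt
    · obtain ⟨hy0, hy1⟩ := hsub hy
      obtain ⟨hz0, hz1⟩ := hsub hz
      have hdy : (0:ℝ) < 2 - y := by linarith
      have hdz : (0:ℝ) < 2 - z := by linarith
      rw [div_eq_div_iff hdy.ne' hdz.ne'] at hyz
      linarith
  -- measure of {0,1} is zero
  have hae01 : (volume : Measure ℝ) ({0,1} : Set ℝ) = 0 := by
    rw [Set.insert_eq]
    exact measure_union_null (measure_singleton 0) (measure_singleton 1)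
  -- reduce the domains of branches 1 and 2 to A (a.e.)
  have hred1 : ∫⁻ y in A ∩ Set.Ico (0:ℝ) 1, ENNReal.ofReal (1 / (y * (1 + y))) =
      ∫⁻ y in A, ENNReal.ofReal (1 / (y * (1 + y))) := by
    apply setLIntegral_congr
    rw [MeasureTheory.ae_eq_set]
    refine ⟨measure_mono_null (fun x hx => absurd hx.1.1 hx.2) measure_empty, ?_⟩
    refine measure_mono_null (fun x hx => ?_) (measure_singleton 1)
    obtain ⟨hxA, hx'⟩ := hx
    obtain ⟨h0, h1⟩ := hsub hxA
    have hni : ¬ (x ∈ Set.Ico (0:ℝ) 1) := fun hm => hx' ⟨hxA, hm⟩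
    simp only [Set.mem_Ico, not_and, not_lt] at hni
    exact Set.mem_singleton_iff.mpr (le_antisymm h1 (hni h0))
  have hred2 : ∫⁻ y in A ∩ Set.Ioc (0:ℝ) 1, ENNReal.ofReal (1 / (1 + y)) =
      ∫⁻ y in A, ENNReal.ofReal (1 / (1 + y)) := by
    apply setLIntegral_congr
    rw [MeasureTheory.ae_eq_set]
    refine ⟨measure_mono_null (fun x hx => absurd hx.1.1 hx.2) measure_empty, ?_⟩
    refine measure_mono_null (fun x hx => ?_) (measure_singleton 0)
    obtain ⟨hxA, hx'⟩ := hx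
    obtain ⟨h0, h1⟩ := hsub hxA
    have hni : ¬ (x ∈ Set.Ioc (0:ℝ) 1) := fun hm => hx' ⟨hxA, hm⟩
    simp only [Set.mem_Ioc, not_and, not_le] at hni
    rcases eq_or_lt_of_le h0 with heq | hlt
    · exact Set.mem_singleton_iff.mpr heq.symm
    · exact absurd h1 (not_le.mpr (hni hlt))
  -- disjointness and measurability of pieces
  have hm2 : MeasurableSet (romik ⁻¹' A ∩ Set.Ico (1/3:ℝ) (1/2)) :=
    hRA.inter measurableSet_Ico
  have hm3 : MeasurableSet (romik ⁻¹' A ∩ Set.Icc (1/2:ℝ) 1) :=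
    hRA.inter measurableSet_Icc
  have hd23 : Disjoint (romik ⁻¹' A ∩ Set.Ico (1/3:ℝ) (1/2))
      (romik ⁻¹' A ∩ Set.Icc (1/2:ℝ) 1) := by
    apply Set.disjoint_left.mpr
    rintro x ⟨-, -, h1⟩ ⟨-, h2, -⟩
    linarith
  have hd123 : Disjoint (romik ⁻¹' A ∩ Set.Ico (0:ℝ) (1/3))
      ((romik ⁻¹' A ∩ Set.Ico (1/3:ℝ) (1/2)) ∪ (romik ⁻¹' A ∩ Set.Icc (1/2:ℝ) 1)) := by
    apply Set.disjoint_left.mpr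
    rintro x ⟨-, -, h1⟩ (⟨-, h2, -⟩ | ⟨-, h2, -⟩) <;> linarith
  rw [hsplit, lintegral_union (hm2.union hm3) hd123, lintegral_union hm3 hd23,
    hint1, hint2, hint3, hred1, hred2]
  -- combine the three integrals
  have m2 : Measurable (fun y : ℝ => ENNReal.ofReal (1 / (1 + y))) :=
    (measurable_const.div (measurable_const.add measurable_id)).ennreal_ofReal
  have m1 : Measurable (fun y : ℝ => ENNReal.ofReal (1 / (y * (1 + y)))) :=
    (measurable_const.div (measurable_id.mul (measurable_const.add measurable_id))).ennreal_ofReal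
  rw [← lintegral_add_left m2, ← lintegral_add_left m1]
  apply lintegral_congr_ae
  have h01 : ∀ᵐ y ∂(volume.restrict A), y ∉ ({0,1} : Set ℝ) :=
    ae_restrict_of_ae (compl_mem_ae_iff.mpr hae01)
  filter_upwards [ae_restrict_mem hA, h01] with y hyA hy01
  simp only [Set.mem_insert_iff, Set.mem_singleton_iff, not_or] at hy01
  obtain ⟨hy0, hy1⟩ := hy01
  obtain ⟨h0, h1⟩ := hsub hyA
  have hy0' : 0 < y := lt_of_le_of_ne h0 (Ne.symm hy0)
  have hy1' : y < 1 := lt_of_le_of_ne h1 hy1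
  have h1y : (0:ℝ) < 1 + y := by linarith
  have h1y' : (0:ℝ) < 1 - y := by linarith
  rw [hh]
  simp only []
  rw [← ENNReal.ofReal_add (by positivity) (by positivity),
    ← ENNReal.ofReal_add (by positivity) (by positivity)]
  congr 1
  field_simp
  ring
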